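/- For any two density matrices ρ and σ on ℂ^d, the square of their fidelity plus the square of their trace distance is at most 1; that is, F(ρ,σ)² + TD(ρ,σ)² ≤ 1. -/

import Mathlib

set_option maxHeartbeats 1000000


open Matrix ComplexOrder

/-- The square root of a positive semidefinite matrix (the definition of `Matrix.PosSemidef.sqrt`
in the older Mathlib, which has since been removed). -/
noncomputable def Matrix.PosSemidef.sqrt {n : Type*} [Fintype n] [DecidableEq n] {𝕜 : Type*}
    [RCLike 𝕜] {A : Matrix n n 𝕜} (hA : A.PosSemidef) : Matrix n n 𝕜 :=
  hA.1.eigenvectorUnitary.1 * diagonal ((↑) ∘ Real.sqrt ∘ hA.1.eigenvalues) *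
    (star hA.1.eigenvectorUnitary : Matrix n n 𝕜)

theorem Matrix.PosSemidef.posSemidef_sqrt {n : Type*} [Fintype n] [DecidableEq n] {𝕜 : Type*}
    [RCLike 𝕜] {A : Matrix n n 𝕜} (hA : A.PosSemidef) : hA.sqrt.PosSemidef := by
  unfold Matrix.PosSemidef.sqrt
  have h : (diagonal ((↑) ∘ Real.sqrt ∘ hA.1.eigenvalues) : Matrix n n 𝕜).PosSemidef :=
    PosSemidef.diagonal (fun i => by simp [Function.comp, Real.sqrt_nonneg])
  have := h.mul_mul_conjTranspose_same (hA.1.eigenvectorUnitary : Matrix n n 𝕜)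
  simpa [Matrix.star_eq_conjTranspose] using this

open scoped MatrixOrder in
lemma Matrix.PosSemidef.sqrt_eq_cfcSqrt {n : Type*} [Fintype n] [DecidableEq n]
    {A : Matrix n n ℂ} (hA : A.PosSemidef) : hA.sqrt = CFC.sqrt A := by
  rw [CFC.sqrt_eq_real_sqrt A hA.nonneg, cfcₙ_eq_cfc, hA.1.cfc_eq]
  simp [IsHermitian.cfc, Unitary.conjStarAlgAut_apply, Matrix.PosSemidef.sqrt, Function.comp_def,
    Matrix.star_eq_conjTranspose]

open scoped MatrixOrder in
lemma Matrix.PosSemidef.sqrt_mul_self {n : Type*} [Fintype n] [DecidableEq n]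
    {A : Matrix n n ℂ} (hA : A.PosSemidef) : hA.sqrt * hA.sqrt = A := by
  rw [hA.sqrt_eq_cfcSqrt]
  exact CFC.sqrt_mul_sqrt_self A hA.nonneg

open scoped MatrixOrder in
lemma Matrix.PosSemidef.eq_sqrt_of_sq_eq {n : Type*} [Fintype n] [DecidableEq n]
    {A B : Matrix n n ℂ} (hB : B.PosSemidef) (hA : A.PosSemidef) (h : B ^ 2 = A) :
    B = hA.sqrt := by
  rw [hA.sqrt_eq_cfcSqrt, ← h, CFC.sqrt_sq B hB.nonneg]


section Aux

variable {d : ℕ}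

/-- Squared Frobenius norm. -/
noncomputable def frobSq (A : Matrix (Fin d) (Fin d) ℂ) : ℝ := ((Aᴴ * A).trace).re

lemma trace_conjTranspose_mul (A B : Matrix (Fin d) (Fin d) ℂ) :
    (Aᴴ * B).trace = ∑ j, ∑ i, (starRingEnd ℂ) (A i j) * B i j := by
  simp [Matrix.trace, Matrix.diag, Matrix.mul_apply, Matrix.conjTranspose_apply]

lemma frobSq_eq (A : Matrix (Fin d) (Fin d) ℂ) :
    frobSq A = ∑ j, ∑ i, ‖A i j‖ ^ 2 := by
  simp only [frobSq, trace_conjTranspose_mul, Complex.re_sum]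
  congr 1; ext j; congr 1; ext i
  rw [← Complex.normSq_eq_conj_mul_self, Complex.ofReal_re, ← Complex.sq_norm]

lemma frobSq_nonneg (A : Matrix (Fin d) (Fin d) ℂ) : 0 ≤ frobSq A := by
  rw [frobSq_eq]
  positivity

/-- Cauchy–Schwarz for the Frobenius inner product (real part form). -/
lemma re_trace_mul_le (A B : Matrix (Fin d) (Fin d) ℂ) :
    ((Aᴴ * B).trace).re ≤ Real.sqrt (frobSq A) * Real.sqrt (frobSq B) := by
  have h1 : ((Aᴴ * B).trace).re ≤ ∑ j, ∑ i, ‖A i j‖ * ‖B i j‖ := by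
    rw [trace_conjTranspose_mul, Complex.re_sum]
    refine Finset.sum_le_sum fun j _ => ?_
    rw [Complex.re_sum]
    refine Finset.sum_le_sum fun i _ => ?_
    calc (((starRingEnd ℂ) (A i j)) * B i j).re ≤ ‖(starRingEnd ℂ) (A i j) * B i j‖ :=
        Complex.re_le_norm _
      _ = ‖A i j‖ * ‖B i j‖ := by rw [norm_mul, RCLike.norm_conj]
  refine h1.trans ?_
  have h2 : (∑ j, ∑ i, ‖A i j‖ * ‖B i j‖) ^ 2 ≤ (frobSq A) * (frobSq B) := by
    rw [frobSq_eq, frobSq_eq]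
    calc (∑ j, ∑ i, ‖A i j‖ * ‖B i j‖) ^ 2
        = (∑ p : Fin d × Fin d, ‖A p.2 p.1‖ * ‖B p.2 p.1‖) ^ 2 := by
          rw [← Finset.sum_product', Finset.univ_product_univ]
      _ ≤ (∑ p : Fin d × Fin d, ‖A p.2 p.1‖ ^ 2) * ∑ p : Fin d × Fin d, ‖B p.2 p.1‖ ^ 2 :=
          Finset.sum_mul_sq_le_sq_mul_sq _ _ _
      _ = _ := by rw [← Finset.sum_product', ← Finset.sum_product', Finset.univ_product_univ]
  have h3 : 0 ≤ ∑ j, ∑ i, ‖A i j‖ * ‖B i j‖ := by positivity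
  calc (∑ j, ∑ i, ‖A i j‖ * ‖B i j‖) = Real.sqrt ((∑ j, ∑ i, ‖A i j‖ * ‖B i j‖)^2) :=
      (Real.sqrt_sq h3).symm
    _ ≤ Real.sqrt ((frobSq A) * (frobSq B)) := Real.sqrt_le_sqrt h2
    _ = _ := Real.sqrt_mul (frobSq_nonneg A) _

lemma frobSq_conjTranspose (A : Matrix (Fin d) (Fin d) ℂ) : frobSq Aᴴ = frobSq A := by
  rw [frobSq, frobSq, Matrix.conjTranspose_conjTranspose, Matrix.trace_mul_comm]

lemma frobSq_unitary_mul {W : Matrix (Fin d) (Fin d) ℂ}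
    (hW : W ∈ Matrix.unitaryGroup (Fin d) ℂ) (A : Matrix (Fin d) (Fin d) ℂ) :
    frobSq (W * A) = frobSq A := by
  have hWW : Wᴴ * W = 1 := by
    simpa [Matrix.star_eq_conjTranspose] using Matrix.mem_unitaryGroup_iff'.mp hW
  rw [frobSq, Matrix.conjTranspose_mul]
  rw [show Aᴴ * Wᴴ * (W * A) = Aᴴ * (Wᴴ * W) * A by simp only [Matrix.mul_assoc]]
  rw [hWW, Matrix.mul_one, frobSq]

lemma sqrt_congr {A B : Matrix (Fin d) (Fin d) ℂ} (h : A = B)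
    (hA : A.PosSemidef) (hB : B.PosSemidef) : hA.sqrt = hB.sqrt := by
  subst h; rfl

lemma psd_trace_re_nonneg {A : Matrix (Fin d) (Fin d) ℂ} (hA : A.PosSemidef) :
    0 ≤ A.trace.re := by
  rw [Matrix.trace, Complex.re_sum]
  refine Finset.sum_nonneg fun i _ => ?_
  have := hA.re_dotProduct_nonneg (Pi.single i 1)
  simpa [dotProduct, Matrix.mulVec_single, Pi.single_apply, Finset.sum_ite_eq] using this

lemma herm_trace_eq_re {A : Matrix (Fin d) (Fin d) ℂ} (hA : A.IsHermitian) :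
    A.trace = (A.trace.re : ℂ) := by
  have him : A.trace.im = 0 := by
    rw [Matrix.trace, Complex.im_sum]
    refine Finset.sum_eq_zero fun i _ => ?_
    have := congrArg (fun M : Matrix (Fin d) (Fin d) ℂ => M i i) hA
    simp only [Matrix.conjTranspose_apply] at this
    have : (starRingEnd ℂ) (A i i) = A i i := this
    exact Complex.conj_eq_iff_im.mp this
  apply Complex.ext <;> simp [him]


/-- sqrt of `C * diagonal μ * Cᴴ` with `C` unitary, `μ ≥ 0`: conjugate the sqrt of the diagonal. -/
lemma sqrt_unitary_diagonal (C : Matrix (Fin d) (Fin d) ℂ)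
    (hC : C ∈ Matrix.unitaryGroup (Fin d) ℂ) (μ : Fin d → ℝ) (hμ : ∀ i, 0 ≤ μ i)
    {A : Matrix (Fin d) (Fin d) ℂ}
    (hAeq : A = C * Matrix.diagonal (fun i => (μ i : ℂ)) * Cᴴ) (hA : A.PosSemidef) :
    hA.sqrt = C * Matrix.diagonal (fun i => ((Real.sqrt (μ i) : ℝ) : ℂ)) * Cᴴ := by
  have hCC : Cᴴ * C = 1 := by
    have := Matrix.mem_unitaryGroup_iff'.mp hC
    simpa [Matrix.star_eq_conjTranspose] using this
  have hpsd : (C * Matrix.diagonal (fun i => ((Real.sqrt (μ i) : ℝ) : ℂ)) * Cᴴ).PosSemidef := by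
    have hdiag : (Matrix.diagonal (fun i => ((Real.sqrt (μ i) : ℝ) : ℂ))).PosSemidef := by
      refine Matrix.posSemidef_diagonal_iff.mpr fun i => ?_
      exact_mod_cast Complex.zero_le_real.mpr (Real.sqrt_nonneg _)
    simpa [Matrix.star_eq_conjTranspose] using hdiag.mul_mul_conjTranspose_same C
  have hsq : (C * Matrix.diagonal (fun i => ((Real.sqrt (μ i) : ℝ) : ℂ)) * Cᴴ) ^ 2 = A := by
    rw [pow_two, hAeq]
    calc C * Matrix.diagonal _ * Cᴴ * (C * Matrix.diagonal _ * Cᴴ)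
        = C * (Matrix.diagonal (fun i => ((Real.sqrt (μ i) : ℝ) : ℂ)) *
            (Cᴴ * C) * Matrix.diagonal (fun i => ((Real.sqrt (μ i) : ℝ) : ℂ))) * Cᴴ := by
          simp only [Matrix.mul_assoc]
      _ = C * Matrix.diagonal (fun i => (μ i : ℂ)) * Cᴴ := by
          rw [hCC, Matrix.mul_one, Matrix.diagonal_mul_diagonal]
          have hfun : (fun i => ((Real.sqrt (μ i) : ℝ) : ℂ) * ((Real.sqrt (μ i) : ℝ) : ℂ))
              = fun i => ((μ i : ℝ) : ℂ) :=
            funext fun i => by rw [← Complex.ofReal_mul, Real.mul_self_sqrt (hμ i)]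
          rw [hfun]
  exact (hpsd.eq_sqrt_of_sq_eq hA hsq).symm




/-- For Hermitian `H` there is a unitary `W` with `W * H = √(Hᴴ H)`. -/
lemma exists_unitary_mul_herm_eq_sqrt {H : Matrix (Fin d) (Fin d) ℂ} (hH : H.IsHermitian) :
    ∃ W ∈ Matrix.unitaryGroup (Fin d) ℂ,
      W * H = (Matrix.posSemidef_conjTranspose_mul_self H).sqrt := by
  classical
  set C : Matrix (Fin d) (Fin d) ℂ := (hH.eigenvectorUnitary : Matrix (Fin d) (Fin d) ℂ) with hCdef
  have hCmem : C ∈ Matrix.unitaryGroup (Fin d) ℂ := hH.eigenvectorUnitary.2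
  have hCC : Cᴴ * C = 1 := by
    simpa [Matrix.star_eq_conjTranspose] using Matrix.mem_unitaryGroup_iff'.mp hCmem
  set μ : Fin d → ℝ := hH.eigenvalues with hμdef
  have hspec : H = C * Matrix.diagonal (fun i => (μ i : ℂ)) * Cᴴ := by
    have := hH.spectral_theorem
    simpa [Matrix.star_eq_conjTranspose, Function.comp_def, Unitary.conjStarAlgAut_apply] using this
  set sgn : Fin d → ℝ := fun i => if μ i < 0 then -1 else 1 with hsgndef
  set W : Matrix (Fin d) (Fin d) ℂ := C * Matrix.diagonal (fun i => (sgn i : ℂ)) * Cᴴ with hWdef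
  have hDmem : Matrix.diagonal (fun i => (sgn i : ℂ)) ∈ Matrix.unitaryGroup (Fin d) ℂ := by
    rw [Matrix.mem_unitaryGroup_iff']
    rw [Matrix.star_eq_conjTranspose, Matrix.diagonal_conjTranspose, Matrix.diagonal_mul_diagonal]
    ext i j
    rcases eq_or_ne i j with rfl | hij
    · by_cases h : μ i < 0 <;>
        simp [Matrix.diagonal_apply_eq, Pi.star_apply, hsgndef, h, Matrix.one_apply]
    · simp [Matrix.diagonal_apply_ne _ hij, Matrix.one_apply, hij]
  have hWmem : W ∈ Matrix.unitaryGroup (Fin d) ℂ := by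
    rw [hWdef]
    exact mul_mem (mul_mem hCmem hDmem) (by
      simpa [Matrix.star_eq_conjTranspose] using Unitary.star_mem hCmem)
  refine ⟨W, hWmem, ?_⟩
  have hHH : Hᴴ * H = C * Matrix.diagonal (fun i => ((μ i ^ 2 : ℝ) : ℂ)) * Cᴴ := by
    rw [hH.eq]
    calc H * H = C * (Matrix.diagonal (fun i => (μ i : ℂ)) * (Cᴴ * C) *
        Matrix.diagonal (fun i => (μ i : ℂ))) * Cᴴ := by
          rw [hspec]; simp only [Matrix.mul_assoc]
      _ = _ := by
          rw [hCC, Matrix.mul_one, Matrix.diagonal_mul_diagonal]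
          congr 2
          funext i
          push_cast
          ring
  have hsq := sqrt_unitary_diagonal C hCmem (fun i => μ i ^ 2) (fun i => sq_nonneg _)
      hHH (Matrix.posSemidef_conjTranspose_mul_self H)
  rw [hsq]
  calc W * H = C * (Matrix.diagonal (fun i => (sgn i : ℂ)) * (Cᴴ * C) *
      Matrix.diagonal (fun i => (μ i : ℂ))) * Cᴴ := by
        rw [hWdef, hspec]; simp only [Matrix.mul_assoc]
    _ = C * Matrix.diagonal (fun i => ((Real.sqrt (μ i ^ 2) : ℝ) : ℂ)) * Cᴴ := by
        rw [hCC, Matrix.mul_one, Matrix.diagonal_mul_diagonal]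
        have hfun : (fun i => ((sgn i : ℝ) : ℂ) * ((μ i : ℝ) : ℂ))
            = fun i => ((Real.sqrt (μ i ^ 2) : ℝ) : ℂ) := by
          funext i
          rw [Real.sqrt_sq_eq_abs, ← Complex.ofReal_mul]
          congr 1
          by_cases h : μ i < 0
          · simp [hsgndef, h, abs_of_neg h]
          · simp [hsgndef, h, abs_of_nonneg (not_lt.mp h)]
        rw [hfun]




/-- Polar-type result: a unitary attaining the trace norm. -/
lemma exists_unitary_trace_eq (B : Matrix (Fin d) (Fin d) ℂ) :
    ∃ U ∈ Matrix.unitaryGroup (Fin d) ℂ,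
      (Uᴴ * B).trace = (Matrix.posSemidef_conjTranspose_mul_self B).sqrt.trace := by
  classical
  set hH := Matrix.posSemidef_conjTranspose_mul_self B with hHdef
  have hherm : (Bᴴ * B).IsHermitian := hH.1
  set C : Matrix (Fin d) (Fin d) ℂ := (hherm.eigenvectorUnitary : Matrix (Fin d) (Fin d) ℂ)
    with hCdef
  have hCmem : C ∈ Matrix.unitaryGroup (Fin d) ℂ := hherm.eigenvectorUnitary.2
  have hCC : Cᴴ * C = 1 := by
    simpa [Matrix.star_eq_conjTranspose] using Matrix.mem_unitaryGroup_iff'.mp hCmem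
  set μ : Fin d → ℝ := hherm.eigenvalues with hμdef
  have hμnn : ∀ i, 0 ≤ μ i := fun i => hH.eigenvalues_nonneg i
  have hspec : Bᴴ * B = C * Matrix.diagonal (fun i => (μ i : ℂ)) * Cᴴ := by
    have := hherm.spectral_theorem
    simpa [Matrix.star_eq_conjTranspose, Function.comp_def, Unitary.conjStarAlgAut_apply] using this
  have hsqrt : hH.sqrt = C * Matrix.diagonal (fun i => ((Real.sqrt (μ i) : ℝ) : ℂ)) * Cᴴ :=
    sqrt_unitary_diagonal C hCmem μ hμnn hspec hH
  have htraceSqrt : hH.sqrt.trace = ∑ j, ((Real.sqrt (μ j) : ℝ) : ℂ) := by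
    rw [hsqrt, Matrix.trace_mul_cycle, hCC, Matrix.one_mul, Matrix.trace_diagonal]
  -- eigenvector images
  set c : Fin d → EuclideanSpace ℂ (Fin d) := fun j => hherm.eigenvectorBasis j with hcdef
  set w : Fin d → (Fin d → ℂ) := fun j => B *ᵥ ⇑(c j) with hwdef
  have hww : ∀ i j, dotProduct (star (w i)) (w j)
      = if i = j then ((μ j : ℝ) : ℂ) else 0 := by
    intro i j
    have h1 : dotProduct (star (w i)) (w j)
        = dotProduct (star ⇑(c i)) ((Bᴴ * B) *ᵥ ⇑(c j)) := by
      rw [hwdef]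
      simp only [Matrix.star_mulVec, ← Matrix.mulVec_mulVec]
      rw [← Matrix.dotProduct_mulVec]
    rw [h1, hherm.mulVec_eigenvectorBasis]
    have h2 : dotProduct (star ⇑(c i)) ((μ j : ℝ) • ⇑(c j))
        = ((μ j : ℝ) : ℂ) * dotProduct (star ⇑(c i)) ⇑(c j) := by
      rw [dotProduct_smul]
      simp [Complex.real_smul]
    rw [h2]
    have h3 : dotProduct (star ⇑(c i)) ⇑(c j) = if i = j then 1 else 0 := by
      have := orthonormal_iff_ite.mp hherm.eigenvectorBasis.orthonormal i j
      rw [← this, EuclideanSpace.inner_eq_star_dotProduct, dotProduct_comm]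
    rw [h3]
    by_cases h : i = j <;> simp [h]
  -- the candidate orthonormal family
  set v : Fin d → EuclideanSpace ℂ (Fin d) :=
    fun j => (((Real.sqrt (μ j))⁻¹ : ℝ) : ℂ) • ((WithLp.equiv 2 _).symm (w j)) with hvdef
  set s : Set (Fin d) := {j | μ j ≠ 0} with hsdef
  have hsqrt_ne : ∀ j ∈ s, Real.sqrt (μ j) ≠ 0 := fun j hj =>
    Real.sqrt_ne_zero'.mpr (lt_of_le_of_ne (hμnn j) (Ne.symm hj))
  have hinner_wv : ∀ x : EuclideanSpace ℂ (Fin d), ∀ j,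
      (inner ℂ x ((WithLp.equiv 2 _).symm (w j)) : ℂ) = dotProduct (star ⇑x) (w j) := by
    intro x j
    rw [PiLp.inner_apply]
    simp [dotProduct, WithLp.equiv_symm_apply, PiLp.toLp_apply, mul_comm]
  have hinner_ww : ∀ j, (inner ℂ ((WithLp.equiv 2 (Fin d → ℂ)).symm (w j))
      ((WithLp.equiv 2 (Fin d → ℂ)).symm (w j)) : ℂ) = ((μ j : ℝ) : ℂ) := by
    intro j
    rw [hinner_wv]
    have hst : star ⇑((WithLp.equiv 2 (Fin d → ℂ)).symm (w j)) = star (w j) := rfl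
    rw [hst, hww]
    simp
  have hv_on : Orthonormal ℂ (s.restrict v) := by
    rw [orthonormal_iff_ite]
    rintro ⟨i, hi⟩ ⟨j, hj⟩
    simp only [Set.restrict, Set.domRestrict, hvdef]
    rw [inner_smul_left, inner_smul_right]
    have hmid : (inner ℂ ((WithLp.equiv 2 (Fin d → ℂ)).symm (w i))
        ((WithLp.equiv 2 (Fin d → ℂ)).symm (w j)) : ℂ) = if i = j then ((μ j : ℝ) : ℂ) else 0 := by
      rw [hinner_wv]
      have hst : star ⇑((WithLp.equiv 2 (Fin d → ℂ)).symm (w i)) = star (w i) := rfl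
      rw [hst, hww]
    rw [hmid]
    by_cases h : i = j
    · subst h
      simp only [if_pos rfl, Subtype.mk.injEq, if_true]
      have hμpos : 0 < μ i := lt_of_le_of_ne (hμnn i) (Ne.symm hi)
      have hre : ((Real.sqrt (μ i))⁻¹) * (((Real.sqrt (μ i))⁻¹) * (μ i)) = 1 := by
        have h2 : Real.sqrt (μ i) * Real.sqrt (μ i) = μ i := Real.mul_self_sqrt (hμnn i)
        have h3 : Real.sqrt (μ i) ≠ 0 := hsqrt_ne i hi
        field_simp
        try linarith [h2]
      simp only [Complex.conj_ofReal, if_true]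
      exact_mod_cast hre
    · have hne : (⟨i, hi⟩ : s) ≠ ⟨j, hj⟩ := by simpa using h
      simp [h, hne]
  obtain ⟨b, hb⟩ := hv_on.exists_orthonormalBasis_extension_of_card_eq
    (by simp [finrank_euclideanSpace])
  set U₀ : Matrix (Fin d) (Fin d) ℂ :=
    (EuclideanSpace.basisFun (Fin d) ℂ).toBasis.toMatrix ⇑b with hU₀def
  have hU₀mem : U₀ ∈ Matrix.unitaryGroup (Fin d) ℂ :=
    (EuclideanSpace.basisFun (Fin d) ℂ).toMatrix_orthonormalBasis_mem_unitary b
  have hU₀apply : ∀ i j, U₀ i j = b j i := by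
    intro i j
    rw [hU₀def, Module.Basis.toMatrix_apply]
    rfl
  refine ⟨U₀ * Cᴴ, mul_mem hU₀mem (by
    simpa [Matrix.star_eq_conjTranspose] using Unitary.star_mem hCmem), ?_⟩
  have hUH : (U₀ * Cᴴ)ᴴ = C * U₀ᴴ := by
    rw [Matrix.conjTranspose_mul, Matrix.conjTranspose_conjTranspose]
  rw [hUH, htraceSqrt, Matrix.mul_assoc, Matrix.trace_mul_comm, Matrix.mul_assoc,
    trace_conjTranspose_mul]
  have hBC : ∀ i j, (B * C) i j = w j i := by
    intro i j
    rw [Matrix.mul_apply]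
    have : w j i = ∑ k, B i k * (c j) k := rfl
    rw [this]
    refine Finset.sum_congr rfl fun k _ => ?_
    congr 1
  refine Finset.sum_congr rfl fun j _ => ?_
  have hSj : ∑ i, (starRingEnd ℂ) (U₀ i j) * (B * C) i j
      = dotProduct (star ⇑(b j)) (w j) := by
    refine Finset.sum_congr rfl fun i _ => ?_
    rw [hU₀apply, hBC]
    rfl
  rw [hSj]
  by_cases hj : j ∈ s
  · have hbj : ⇑(b j) = ⇑(v j) := by rw [hb j hj]
    rw [hbj]
    have hvj : ⇑(v j) = fun i => (((Real.sqrt (μ j))⁻¹ : ℝ) : ℂ) * (w j i) := by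
      funext i
      simp [hvdef, WithLp.equiv_symm_apply, PiLp.toLp_apply]
    rw [hvj]
    have : dotProduct (star fun i => (((Real.sqrt (μ j))⁻¹ : ℝ) : ℂ) * (w j i)) (w j)
        = (starRingEnd ℂ) (((Real.sqrt (μ j))⁻¹ : ℝ) : ℂ)
          * dotProduct (star (w j)) (w j) := by
      simp [dotProduct, Finset.mul_sum, mul_assoc]
    rw [this, hww]
    simp only [if_pos rfl, Complex.conj_ofReal, if_true]
    rw [← Complex.ofReal_mul]
    congr 1
    have h2 : Real.sqrt (μ j) * Real.sqrt (μ j) = μ j := Real.mul_self_sqrt (hμnn j)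
    have h3 : Real.sqrt (μ j) ≠ 0 := hsqrt_ne j hj
    field_simp
    try linarith [h2]
  · have hμ0 : μ j = 0 := not_not.mp hj
    have hwj : (WithLp.equiv 2 (Fin d → ℂ)).symm (w j) = 0 := by
      rw [← inner_self_eq_zero (𝕜 := ℂ), hinner_ww, hμ0]
      simp
    have hwj' : w j = 0 := by
      have := congrArg (WithLp.equiv 2 (Fin d → ℂ)) hwj
      simpa using this
    rw [hwj', hμ0]
    simp [dotProduct]


end Aux

/-- The trace norm of a matrix: `‖X‖₁ = Tr √(Xᴴ X)`. -/
noncomputable def traceNorm {d : ℕ} (X : Matrix (Fin d) (Fin d) ℂ) : ℝ :=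
  ((Matrix.posSemidef_conjTranspose_mul_self X).sqrt.trace).re

/-- The trace distance between two matrices: `TD(ρ,σ) = ‖ρ − σ‖₁ / 2`. -/
noncomputable def traceDist {d : ℕ} (ρ σ : Matrix (Fin d) (Fin d) ℂ) : ℝ :=
  traceNorm (ρ - σ) / 2

/-- A density matrix: positive semidefinite with trace 1. -/
def IsDensityMatrix {d : ℕ} (ρ : Matrix (Fin d) (Fin d) ℂ) : Prop :=
  ρ.PosSemidef ∧ ρ.trace = 1

/-- The fidelity `F(ρ,σ) = (Tr √(√ρ σ √ρ))²`. -/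
noncomputable def fidelity {d : ℕ} {ρ σ : Matrix (Fin d) (Fin d) ℂ}
    (hρ : ρ.PosSemidef) (hσ : σ.PosSemidef) : ℝ :=
  (((show (hρ.sqrt * σ * hρ.sqrt).PosSemidef by
      simpa only [hρ.posSemidef_sqrt.isHermitian.eq] using
        hσ.mul_mul_conjTranspose_same hρ.sqrt).sqrt.trace).re) ^ 2

/-- For any two density matrices, `F(ρ,σ)² + TD(ρ,σ)² ≤ 1`. -/
theorem fidelity_sq_add_traceDist_sq_le_one {d : ℕ} {ρ σ : Matrix (Fin d) (Fin d) ℂ}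
    (hρ : IsDensityMatrix ρ) (hσ : IsDensityMatrix σ) :
    (fidelity hρ.1 hσ.1) ^ 2 + (traceDist ρ σ) ^ 2 ≤ 1 := by
  classical
  have hXp := hρ.1.posSemidef_sqrt
  have hYp := hσ.1.posSemidef_sqrt
  set X := hρ.1.sqrt with hXdef
  set Y := hσ.1.sqrt with hYdef
  have hXh : Xᴴ = X := hXp.isHermitian
  have hYh : Yᴴ = Y := hYp.isHermitian
  have hXX : X * X = ρ := hρ.1.sqrt_mul_self
  have hYY : Y * Y = σ := hσ.1.sqrt_mul_self
  set B := Y * X with hBdef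
  have hBH : Bᴴ = X * Y := by rw [hBdef, Matrix.conjTranspose_mul, hXh, hYh]
  have hBB : Bᴴ * B = X * σ * X := by
    rw [hBH, hBdef, ← hYY]
    simp only [Matrix.mul_assoc]
  have hPB := Matrix.posSemidef_conjTranspose_mul_self B
  set t : ℝ := (hPB.sqrt.trace).re with htdef
  have ht0 : 0 ≤ t := psd_trace_re_nonneg hPB.posSemidef_sqrt
  have htC : hPB.sqrt.trace = (t : ℂ) := herm_trace_eq_re hPB.posSemidef_sqrt.isHermitian
  -- fidelity = t ^ 2
  have hfid : fidelity hρ.1 hσ.1 = t ^ 2 := by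
    have h2 : (hρ.1.sqrt * σ * hρ.1.sqrt).PosSemidef := by
      simpa only [hρ.1.posSemidef_sqrt.isHermitian.eq] using
        hσ.1.mul_mul_conjTranspose_same hρ.1.sqrt
    have hdef : fidelity hρ.1 hσ.1 = ((h2.sqrt.trace).re) ^ 2 := rfl
    rw [hdef, htdef, sqrt_congr hBB hPB h2]
  obtain ⟨U, hUmem, hUtr⟩ := exists_unitary_trace_eq B
  have hUtr' : (Uᴴ * B).trace = (t : ℂ) := by rw [hUtr, htC]
  have hUU : Uᴴ * U = 1 := by
    simpa [Matrix.star_eq_conjTranspose] using Matrix.mem_unitaryGroup_iff'.mp hUmem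
  have hUU' : U * Uᴴ = 1 := by
    simpa [Matrix.star_eq_conjTranspose] using Matrix.mem_unitaryGroup_iff.mp hUmem
  -- trace atoms
  have ha : (X * X).trace = 1 := by rw [hXX, hρ.2]
  have ha' : (Y * Y).trace = 1 := by rw [hYY, hσ.2]
  have hc : ((Uᴴ * Y) * X).trace = (t : ℂ) := by
    rw [Matrix.mul_assoc, ← hBdef, hUtr']
  have hb : (X * (Y * U)).trace = (t : ℂ) := by
    have h1 : X * (Y * U) = (Uᴴ * B)ᴴ := by
      rw [Matrix.conjTranspose_mul, Matrix.conjTranspose_conjTranspose, hBH, Matrix.mul_assoc]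
    rw [h1, Matrix.trace_conjTranspose, hUtr']
    simp
  have hb' : ((Y * U) * X).trace = (t : ℂ) := by rw [Matrix.trace_mul_comm, hb]
  have hc' : (X * (Uᴴ * Y)).trace = (t : ℂ) := by rw [Matrix.trace_mul_comm, hc]
  have hd : ((Uᴴ * Y) * (Y * U)).trace = 1 := by
    have h1 : (Uᴴ * Y) * (Y * U) = Uᴴ * ((Y * Y) * U) := by simp only [Matrix.mul_assoc]
    rw [h1, Matrix.trace_mul_comm, Matrix.mul_assoc, hUU', Matrix.mul_one, ha']
  have hd' : ((Y * U) * (Uᴴ * Y)).trace = 1 := by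
    have h1 : (Y * U) * (Uᴴ * Y) = Y * ((U * Uᴴ) * Y) := by simp only [Matrix.mul_assoc]
    rw [h1, hUU', Matrix.one_mul, ha']
  -- conjTransposes of the four factors
  have hM1ct : (X - Y * U)ᴴ = X - Uᴴ * Y := by
    rw [Matrix.conjTranspose_sub, Matrix.conjTranspose_mul, hXh, hYh]
  have hM3ct : (X + Y * U)ᴴ = X + Uᴴ * Y := by
    rw [Matrix.conjTranspose_add, Matrix.conjTranspose_mul, hXh, hYh]
  have hM2ct : (X + Uᴴ * Y)ᴴ = X + Y * U := by
    rw [Matrix.conjTranspose_add, Matrix.conjTranspose_mul, hXh, hYh,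
      Matrix.conjTranspose_conjTranspose]
  have hM4ct : (X - Uᴴ * Y)ᴴ = X - Y * U := by
    rw [Matrix.conjTranspose_sub, Matrix.conjTranspose_mul, hXh, hYh,
      Matrix.conjTranspose_conjTranspose]
  -- the four Frobenius norms
  have e1 : frobSq (X - Y * U) = 2 - 2 * t := by
    rw [frobSq, hM1ct]
    have hprod : (X - Uᴴ * Y) * (X - Y * U)
        = (X * X - X * (Y * U)) - ((Uᴴ * Y) * X - (Uᴴ * Y) * (Y * U)) := by noncomm_ring
    rw [hprod, Matrix.trace_sub, Matrix.trace_sub, Matrix.trace_sub, ha, hb, hc, hd]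
    simp only [Complex.sub_re, Complex.one_re, Complex.ofReal_re]
    ring
  have e2 : frobSq (X + Uᴴ * Y) = 2 + 2 * t := by
    rw [frobSq, hM2ct]
    have hprod : (X + Y * U) * (X + Uᴴ * Y)
        = (X * X + X * (Uᴴ * Y)) + ((Y * U) * X + (Y * U) * (Uᴴ * Y)) := by noncomm_ring
    rw [hprod, Matrix.trace_add, Matrix.trace_add, Matrix.trace_add, ha, hc', hb', hd']
    simp only [Complex.add_re, Complex.one_re, Complex.ofReal_re]
    ring
  have e3 : frobSq (X + Y * U) = 2 + 2 * t := by
    rw [frobSq, hM3ct]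
    have hprod : (X + Uᴴ * Y) * (X + Y * U)
        = (X * X + X * (Y * U)) + ((Uᴴ * Y) * X + (Uᴴ * Y) * (Y * U)) := by noncomm_ring
    rw [hprod, Matrix.trace_add, Matrix.trace_add, Matrix.trace_add, ha, hb, hc, hd]
    simp only [Complex.add_re, Complex.one_re, Complex.ofReal_re]
    ring
  have e4 : frobSq (X - Uᴴ * Y) = 2 - 2 * t := by
    rw [frobSq, hM4ct]
    have hprod : (X - Y * U) * (X - Uᴴ * Y)
        = (X * X - X * (Uᴴ * Y)) - ((Y * U) * X - (Y * U) * (Uᴴ * Y)) := by noncomm_ring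
    rw [hprod, Matrix.trace_sub, Matrix.trace_sub, Matrix.trace_sub, ha, hc', hb', hd']
    simp only [Complex.sub_re, Complex.one_re, Complex.ofReal_re]
    ring
  have ht1 : t ≤ 1 := by
    have := frobSq_nonneg (X - Y * U)
    rw [e1] at this
    linarith
  -- sign unitary for ρ - σ
  have hHerm : (ρ - σ).IsHermitian := hρ.1.1.sub hσ.1.1
  obtain ⟨W, hWmem, hWeq⟩ := exists_unitary_mul_herm_eq_sqrt hHerm
  have hTN : traceNorm (ρ - σ) = ((W * (ρ - σ)).trace).re := by
    rw [traceNorm, hWeq]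
  -- decomposition of ρ - σ
  have key : (X - Y * U) * (X + Uᴴ * Y) + (X + Y * U) * (X - Uᴴ * Y)
      = (X * X - Y * (U * (Uᴴ * Y))) + (X * X - Y * (U * (Uᴴ * Y))) := by noncomm_ring
  have key2 : (X - Y * U) * (X + Uᴴ * Y) + (X + Y * U) * (X - Uᴴ * Y)
      = (ρ - σ) + (ρ - σ) := by
    rw [key, ← Matrix.mul_assoc U, hUU', Matrix.one_mul, hXX, hYY]
  -- Cauchy–Schwarz bounds
  have hbd1 : ((W * ((X - Y * U) * (X + Uᴴ * Y))).trace).re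
      ≤ Real.sqrt (2 - 2 * t) * Real.sqrt (2 + 2 * t) := by
    have h0 : W * ((X - Y * U) * (X + Uᴴ * Y)) = ((W * (X - Y * U))ᴴ)ᴴ * (X + Uᴴ * Y) := by
      rw [Matrix.conjTranspose_conjTranspose, Matrix.mul_assoc]
    rw [h0]
    have hcs := re_trace_mul_le ((W * (X - Y * U))ᴴ) (X + Uᴴ * Y)
    rwa [frobSq_conjTranspose, frobSq_unitary_mul hWmem, e1, e2] at hcs
  have hbd2 : ((W * ((X + Y * U) * (X - Uᴴ * Y))).trace).re
      ≤ Real.sqrt (2 - 2 * t) * Real.sqrt (2 + 2 * t) := by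
    have h0 : W * ((X + Y * U) * (X - Uᴴ * Y)) = ((W * (X + Y * U))ᴴ)ᴴ * (X - Uᴴ * Y) := by
      rw [Matrix.conjTranspose_conjTranspose, Matrix.mul_assoc]
    rw [h0]
    have hcs := re_trace_mul_le ((W * (X + Y * U))ᴴ) (X - Uᴴ * Y)
    rw [frobSq_conjTranspose, frobSq_unitary_mul hWmem, e3, e4] at hcs
    linarith [hcs, mul_comm (Real.sqrt (2 + 2 * t)) (Real.sqrt (2 - 2 * t))]
  -- combine
  have hsum : ((W * (ρ - σ)).trace).re + ((W * (ρ - σ)).trace).re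
      = ((W * ((X - Y * U) * (X + Uᴴ * Y))).trace).re
        + ((W * ((X + Y * U) * (X - Uᴴ * Y))).trace).re := by
    have h1 : W * (ρ - σ) + W * (ρ - σ)
        = W * ((X - Y * U) * (X + Uᴴ * Y)) + W * ((X + Y * U) * (X - Uᴴ * Y)) := by
      rw [← Matrix.mul_add, ← Matrix.mul_add, key2]
    have h2 := congrArg (fun M : Matrix (Fin d) (Fin d) ℂ => (M.trace).re) h1
    simpa [Matrix.trace_add, Complex.add_re] using h2
  have hTNle : traceNorm (ρ - σ) ≤ Real.sqrt (2 - 2 * t) * Real.sqrt (2 + 2 * t) := by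
    rw [hTN]
    linarith [hsum, hbd1, hbd2]
  have hTNnn : 0 ≤ traceNorm (ρ - σ) :=
    psd_trace_re_nonneg (Matrix.posSemidef_conjTranspose_mul_self (ρ - σ)).posSemidef_sqrt
  have hsq : (Real.sqrt (2 - 2 * t) * Real.sqrt (2 + 2 * t)) ^ 2 = (2 - 2 * t) * (2 + 2 * t) := by
    rw [mul_pow, Real.sq_sqrt (by linarith), Real.sq_sqrt (by linarith)]
  have hTD : traceDist ρ σ = traceNorm (ρ - σ) / 2 := rfl
  rw [hfid, hTD]
  nlinarith [hTNle, hTNnn, hsq, ht0, ht1, sq_nonneg t, sq_nonneg (1 - t ^ 2),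
    sq_nonneg (traceNorm (ρ - σ))]
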